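/- Let 0 < ε ≤ 1/4 and 0 < δ ≤ 1/4. Let (X,d,x), (Y,d',y), (Z,d'',z) be pointed metric spaces, let φ: X → Y be an ε-isometry from (X,x) to (Y,y), and let ψ: Y → Z be a δ-isometry from (Y,y) to (Z,z). Then the composition ψ∘φ: X → Z is a 2(ε+δ)-isometry from (X,x) to (Z,z). -/
import Mathlib


open Metric

/-- A map `φ : X → Y` is an `ε`-isometry from `(X,x)` to `(Y,y)` if it distorts
distances between points of `B(x, 1/ε)` by less than `ε`, and for every
`ε ≤ r ≤ 1/ε`, every point of `B(y, r-ε)` lies within distance `ε` of a point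
of `φ(B(x,r))`. -/
def IsEpsIsometry {X Y : Type*} [MetricSpace X] [MetricSpace Y]
    (ε : ℝ) (x : X) (y : Y) (φ : X → Y) : Prop :=
  (∀ a ∈ ball x (1 / ε), ∀ b ∈ ball x (1 / ε), |dist (φ a) (φ b) - dist a b| < ε) ∧
  ∀ r : ℝ, ε ≤ r → r ≤ 1 / ε → ∀ z ∈ ball y (r - ε),
    ∃ a ∈ ball x r, dist z (φ a) < ε

/-- The composition of an `ε`-isometry and a `δ`-isometry (with `ε, δ ≤ 1/4`)
is a `2(ε+δ)`-isometry. -/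
theorem composition_of_eps_isometries
    {X Y Z : Type*} [MetricSpace X] [MetricSpace Y] [MetricSpace Z]
    (x : X) (y : Y) (z : Z) (ε δ : ℝ)
    (hε : 0 < ε) (hε' : ε ≤ 1 / 4) (hδ : 0 < δ) (hδ' : δ ≤ 1 / 4)
    (φ : X → Y) (ψ : Y → Z)
    (hφ : IsEpsIsometry ε x y φ) (hψ : IsEpsIsometry δ y z ψ) :
    IsEpsIsometry (2 * (ε + δ)) x z (ψ ∘ φ) := by
  obtain ⟨hφ1, hφ2⟩ := hφ
  obtain ⟨hψ1, hψ2⟩ := hψ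
  have hη : (0:ℝ) < 2 * (ε + δ) := by linarith
  -- key reciprocal bounds
  have hinvε : 1 / (2 * (ε + δ)) ≤ 1 / ε :=
    one_div_le_one_div_of_le hε (by linarith)
  have hinvδ : 1 / (2 * (ε + δ)) ≤ 1 / δ :=
    one_div_le_one_div_of_le hδ (by linarith)
  have hδ4 : (4:ℝ) ≤ 1 / δ := by rw [le_div_iff₀ hδ]; linarith
  have hε4 : (4:ℝ) ≤ 1 / ε := by rw [le_div_iff₀ hε]; linarith
  have hinv2δ : 1 / (2 * (ε + δ)) ≤ 1 / (2 * δ) :=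
    one_div_le_one_div_of_le (by linarith) (by linarith)
  have h2δ2 : (2:ℝ) ≤ 1 / (2 * δ) := by rw [le_div_iff₀ (by linarith : (0:ℝ) < 2*δ)]; linarith
  have h2δeq : 1 / (2 * δ) * 2 = 1 / δ := by field_simp
  constructor
  · -- distortion
    intro a ha b hb
    have ha' : a ∈ ball x (1 / ε) := mem_ball.2 (lt_of_lt_of_le (mem_ball.1 ha) hinvε)
    have hb' : b ∈ ball x (1 / ε) := mem_ball.2 (lt_of_lt_of_le (mem_ball.1 hb) hinvε)
    -- find a₀ with φ a₀ near y
    obtain ⟨a0, ha0, hya0⟩ := hφ2 (2 * ε) (by linarith) (by linarith) y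
      (by rw [mem_ball, dist_self]; linarith)
    have ha0' : a0 ∈ ball x (1 / ε) := mem_ball.2 (lt_of_lt_of_le (mem_ball.1 ha0) (by linarith))
    have key : ∀ c ∈ ball x (1 / (2 * (ε + δ))), φ c ∈ ball y (1 / δ) := by
      intro c hc
      have hc' : c ∈ ball x (1 / ε) := mem_ball.2 (lt_of_lt_of_le (mem_ball.1 hc) hinvε)
      have h1 := abs_lt.1 (hφ1 c hc' a0 ha0')
      have h2 : dist (φ c) y ≤ dist (φ c) (φ a0) + dist y (φ a0) := by
        rw [dist_comm y (φ a0)]; exact dist_triangle _ _ _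
      have h3 : dist c a0 ≤ dist c x + dist x a0 := dist_triangle _ _ _
      have hcx := mem_ball.1 hc
      have ha0x : dist x a0 < 2 * ε := by rw [dist_comm]; exact mem_ball.1 ha0
      rw [mem_ball]
      linarith
    have hfa := key a ha
    have hfb := key b hb
    have h1 := abs_lt.1 (hφ1 a ha' b hb')
    have h2 := abs_lt.1 (hψ1 (φ a) hfa (φ b) hfb)
    rw [abs_lt]
    constructor <;> simp only [Function.comp_apply] <;> linarith
  · -- surjectivity
    intro r hr1 hr2 c hc
    have hcz := mem_ball.1 hc
    -- apply ψ-surjectivity with radius r - ε - δ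
    obtain ⟨b, hb, hcb⟩ := hψ2 (r - ε - δ) (by linarith) (by linarith) c
      (by rw [mem_ball]; linarith)
    have hby := mem_ball.1 hb
    -- apply φ-surjectivity with radius r - δ
    obtain ⟨a, ha, hba⟩ := hφ2 (r - δ) (by linarith) (by linarith) b
      (by rw [mem_ball]; linarith)
    have hax := mem_ball.1 ha
    refine ⟨a, mem_ball.2 (by linarith), ?_⟩
    -- φ a ∈ ball y (1/δ), b ∈ ball y (1/δ)
    have hfay : φ a ∈ ball y (1 / δ) := by
      rw [mem_ball]
      have : dist (φ a) y ≤ dist b (φ a) + dist b y := by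
        rw [dist_comm b (φ a)]; exact dist_triangle _ _ _
      linarith
    have hby' : b ∈ ball y (1 / δ) := mem_ball.2 (by linarith)
    have h2 := abs_lt.1 (hψ1 b hby' (φ a) hfay)
    have h3 : dist c (ψ (φ a)) ≤ dist c (ψ b) + dist (ψ b) (ψ (φ a)) := dist_triangle _ _ _
    simp only [Function.comp_apply]
    linarith
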